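/- Let x be a solution of (E) with x(t) ≥ 0 and x′(t) ≥ 0 for all t ≥ τ. Then for every k, x′(t_k) ≥ (r(t_{k+1})/r(t_k))·x′(t_{k+1}) + (φ(x(ζ_k))/r(t_k))·∫_{t_k}^{t_{k+1}} p(u) du. -/

import Mathlib

open MeasureTheory Set Filter

theorem stmt11
    (t ζ : ℕ → ℝ) (ht_mono : StrictMono t)
    (ht_top : Tendsto t atTop atTop)
    (hζ : ∀ k : ℕ, ζ k ∈ Icc (t k) (t (k+1)))
    (r : ℝ → ℝ) (hr_cont : ContinuousOn r (Ici (t 0)))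
    (hr_pos : ∀ s ∈ Ici (t 0), 0 < r s)
    (f : ℝ → ℝ → ℝ)
    (hf_cont : ContinuousOn (fun q : ℝ × ℝ => f q.1 q.2) ((Ici (t 0)) ×ˢ (univ : Set ℝ)))
    (hf_sign : ∀ s ∈ Ici (t 0), ∀ y : ℝ, y ≠ 0 → 0 < y * f s y)
    (x x' : ℝ → ℝ)
    (hx_deriv : ∀ s ∈ Ici (t 0), HasDerivAt x (x' s) s)
    (hx'_cont : ContinuousOn x' (Ici (t 0)))
    (hE : ∀ k : ℕ, ∀ s ∈ Ioo (t k) (t (k+1)),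
      HasDerivAt (fun u => r u * x' u) (-(f s (x (ζ k)))) s)
    (p : ℝ → ℝ) (hp_cont : ContinuousOn p (Ici (t 0)))
    (hp_nonneg : ∀ s ∈ Ici (t 0), 0 ≤ p s)
    (φ : ℝ → ℝ) (hφ_smooth : ContDiff ℝ 1 φ) (hφ_mono : Monotone φ)
    (hφ_sign : ∀ y : ℝ, y ≠ 0 → 0 < y * φ y)
    (hfp_pos : ∀ s ∈ Ici (t 0), ∀ y : ℝ, 0 < y → p s * φ y ≤ f s y)
    (hfp_neg : ∀ s ∈ Ici (t 0), ∀ y : ℝ, y < 0 → f s y ≤ p s * φ y)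
    (hx_nonneg : ∀ s ∈ Ici (t 0), 0 ≤ x s)
    (hx'_nonneg : ∀ s ∈ Ici (t 0), 0 ≤ x' s) :
    ∀ k : ℕ,
      (r (t (k+1)) / r (t k)) * x' (t (k+1)) +
        (φ (x (ζ k)) / r (t k)) * ∫ u in t k..t (k+1), p u ≤ x' (t k) := by
  -- φ 0 = 0
  have hφ0 : φ 0 = 0 := by
    have hc : ContinuousAt φ 0 := hφ_smooth.continuous.continuousAt
    have h1 : φ 0 ≤ 0 := by
      refine le_of_tendsto (hc.tendsto.mono_left (nhdsWithin_le_nhds (s := Iio 0))) ?_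
      filter_upwards [eventually_mem_nhdsWithin] with y hy
      have := hφ_sign y (ne_of_lt hy)
      nlinarith [hy.out]
    have h2 : 0 ≤ φ 0 := by
      refine ge_of_tendsto (hc.tendsto.mono_left (nhdsWithin_le_nhds (s := Ioi 0))) ?_
      filter_upwards [eventually_mem_nhdsWithin] with y hy
      have := hφ_sign y (ne_of_gt hy)
      nlinarith [hy.out]
    linarith
  -- f u 0 ≥ 0 for u ∈ Ici (t 0)
  have hf0 : ∀ u ∈ Ici (t 0), 0 ≤ f u 0 := by
    intro u hu
    have hcw : ContinuousWithinAt (fun y : ℝ => f u y) univ 0 := by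
      have h := hf_cont (u, (0:ℝ)) ⟨hu, trivial⟩
      exact h.comp ((continuous_const.prodMk continuous_id).continuousWithinAt)
        (fun y _ => ⟨hu, trivial⟩)
    have htd : Tendsto (fun y : ℝ => f u y) (nhdsWithin 0 (Ioi 0)) (nhds (f u 0)) := by
      have := hcw.tendsto
      rw [nhdsWithin_univ] at this
      exact this.mono_left nhdsWithin_le_nhds
    refine ge_of_tendsto htd ?_
    filter_upwards [eventually_mem_nhdsWithin] with y hy
    have := hf_sign u hu y (ne_of_gt hy)
    nlinarith [hy.out]
  intro k
  set a := t k with ha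
  set b := t (k+1) with hb
  have hab : a < b := ht_mono (Nat.lt_succ_self k)
  have haI : a ∈ Ici (t 0) := ht_mono.monotone (Nat.zero_le k)
  have hbI : b ∈ Ici (t 0) := ht_mono.monotone (Nat.zero_le (k+1))
  have hsub : Icc a b ⊆ Ici (t 0) := fun s hs => le_trans haI hs.1
  set c := x (ζ k) with hc
  have hζI : ζ k ∈ Ici (t 0) := hsub (hζ k)
  have hcnn : 0 ≤ c := hx_nonneg _ hζI
  -- pointwise bound p u * φ c ≤ f u c
  have hkey : ∀ u ∈ Ici (t 0), p u * φ c ≤ f u c := by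
    intro u hu
    rcases lt_or_eq_of_le hcnn with h | h
    · exact hfp_pos u hu c h
    · rw [← h, hφ0, mul_zero]; exact hf0 u hu
  -- continuity of u ↦ f u c on Ici (t 0)
  have hfc_cont : ContinuousOn (fun u => f u c) (Ici (t 0)) := by
    intro u hu
    have hin : ContinuousWithinAt (fun v : ℝ => (v, c)) (Ici (t 0)) u :=
      (continuous_id.prodMk continuous_const).continuousWithinAt
    exact ContinuousWithinAt.comp (g := fun q : ℝ × ℝ => f q.1 q.2)
      (f := fun v : ℝ => (v, c)) (hf_cont (u, c) ⟨hu, trivial⟩) hin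
      (fun v hv => ⟨hv, trivial⟩)
  -- FTC on [a,b] for g = r * x'
  have hg_cont : ContinuousOn (fun u => r u * x' u) (Icc a b) :=
    (hr_cont.mul hx'_cont).mono hsub
  have hderiv : ∀ s ∈ Ioo a b,
      HasDerivWithinAt (fun u => r u * x' u) (-(f s c)) (Ioi s) s :=
    fun s hs => (hE k s hs).hasDerivWithinAt
  have hint : IntervalIntegrable (fun u => -(f u c)) volume a b := by
    apply ContinuousOn.intervalIntegrable
    rw [uIcc_of_le hab.le]
    exact (hfc_cont.neg).mono hsub
  have hFTC := intervalIntegral.integral_eq_sub_of_hasDeriv_right_of_le hab.le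
    hg_cont hderiv hint
  -- comparison of integrals
  have hint1 : IntervalIntegrable (fun u => p u * φ c) volume a b := by
    apply ContinuousOn.intervalIntegrable
    rw [uIcc_of_le hab.le]
    exact ((hp_cont.mul continuousOn_const)).mono hsub
  have hint2 : IntervalIntegrable (fun u => f u c) volume a b := by
    apply ContinuousOn.intervalIntegrable
    rw [uIcc_of_le hab.le]
    exact hfc_cont.mono hsub
  have hmono : (∫ u in a..b, p u * φ c) ≤ ∫ u in a..b, f u c :=
    intervalIntegral.integral_mono_on hab.le hint1 hint2
      (fun u hu => hkey u (hsub hu))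
  have heq1 : (∫ u in a..b, p u * φ c) = (∫ u in a..b, p u) * φ c :=
    intervalIntegral.integral_mul_const _ _
  have heq2 : (∫ u in a..b, -(f u c)) = -∫ u in a..b, f u c :=
    intervalIntegral.integral_neg
  have hra : 0 < r a := hr_pos a haI
  rw [heq2] at hFTC
  rw [heq1] at hmono
  have hmain : r b * x' b + φ c * ∫ u in a..b, p u ≤ r a * x' a := by nlinarith
  rw [div_mul_eq_mul_div, div_mul_eq_mul_div, ← add_div, div_le_iff₀ hra]
  nlinarith
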